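/- For all integers n ≥ 1, ∑_{j=1}^{n} P_{n-j} ≤ t_n^α / Γ(1+α), where t_n = nρ. -/

import Mathlib

open MeasureTheory Set intervalIntegral

lemma complex_eq_real (α : ℝ) (hα0 : 0 < α) (hα1 : α < 1) :
    ∀ x ∈ Set.Ioc (0:ℝ) 1,
      (x:ℂ) ^ ((α:ℂ)-1) * ((1:ℂ)-x) ^ (((1-α:ℝ):ℂ)-1) = ((x ^ (α-1) * (1-x) ^ (-α) : ℝ) : ℂ) := by
  intro x hx
  rw [Complex.ofReal_mul, Complex.ofReal_cpow hx.1.le, Complex.ofReal_cpow (by linarith [hx.2] : (0:ℝ) ≤ 1 - x)]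
  push_cast
  ring_nf

lemma real_beta_integrable (α : ℝ) (hα0 : 0 < α) (hα1 : α < 1) :
    IntervalIntegrable (fun x : ℝ => x ^ (α-1) * (1-x) ^ (-α)) volume 0 1 := by
  have h := Complex.betaIntegral_convergent (u := (α:ℂ)) (v := ((1-α:ℝ):ℂ))
    (by simpa using hα0) (by simp; linarith)
  have h2 := h.1
  rw [intervalIntegrable_iff_integrableOn_Ioc_of_le (by norm_num : (0:ℝ) ≤ 1)]
  simpa [IntegrableOn] using (h2.congr_fun (fun x hx => complex_eq_real α hα0 hα1 x hx) measurableSet_Ioc).re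

lemma real_beta_value (α : ℝ) (hα0 : 0 < α) (hα1 : α < 1) :
    ∫ x in (0:ℝ)..1, x ^ (α-1) * (1-x) ^ (-α) = Real.Gamma α * Real.Gamma (1-α) := by
  have hG := Complex.Gamma_mul_Gamma_eq_betaIntegral (s := (α:ℂ)) (t := ((1-α:ℝ):ℂ))
    (by simpa using hα0) (by simp; linarith)
  have hsum : (α:ℂ) + ((1-α:ℝ):ℂ) = 1 := by push_cast; ring
  rw [hsum, Complex.Gamma_one, one_mul, Complex.betaIntegral] at hG
  have : ∫ x in (0:ℝ)..1, (x:ℂ) ^ ((α:ℂ)-1) * ((1:ℂ)-x) ^ (((1-α:ℝ):ℂ)-1)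
      = ((∫ x in (0:ℝ)..1, x ^ (α-1) * (1-x) ^ (-α) : ℝ) : ℂ) := by
    rw [← intervalIntegral.integral_ofReal]
    rw [intervalIntegral.integral_of_le (by norm_num : (0:ℝ) ≤ 1),
        intervalIntegral.integral_of_le (by norm_num : (0:ℝ) ≤ 1)]
    exact setIntegral_congr_fun measurableSet_Ioc (fun x hx => complex_eq_real α hα0 hα1 x hx)
  rw [this] at hG
  rw [Complex.Gamma_ofReal, Complex.Gamma_ofReal, ← Complex.ofReal_mul] at hG
  exact_mod_cast hG.symm


lemma chebyshev_int (c : ℝ) (f g : ℝ → ℝ)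
    (hf : AntitoneOn f (Ioo c (c+1))) (hg : MonotoneOn g (Ioo c (c+1)))
    (hfi : IntegrableOn f (Ioo c (c+1))) (hgi : IntegrableOn g (Ioo c (c+1)))
    (hfgi : IntegrableOn (fun x => f x * g x) (Ioo c (c+1))) :
    ∫ x in Ioo c (c+1), f x * g x ≤
      (∫ x in Ioo c (c+1), f x) * (∫ x in Ioo c (c+1), g x) := by
  set I := Ioo c (c+1) with hI
  have hvol : (volume I).toReal = 1 := by simp [hI]
  have hvolfin : volume I < ⊤ := by
    rw [hI, Real.volume_Ioo]; exact ENNReal.ofReal_lt_top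
  set F := ∫ x in I, f x with hF
  set G := ∫ x in I, g x with hG
  set K := ∫ x in I, f x * g x with hK
  have hconst : ∀ r : ℝ, ∫ _ in I, r = r := by
    intro r; rw [setIntegral_const, measureReal_def, hvol, smul_eq_mul, one_mul]
  have expand : ∀ x : ℝ, (∫ y in I, (f x - f y) * (g y - g x))
      = (f x * G + F * g x) - (f x * g x + K) := by
    intro x
    have e1 : ∀ y : ℝ, (f x - f y) * (g y - g x)
        = (f x * g y + f y * g x) - (f x * g x + f y * g y) := by intro y; ring
    have hA : Integrable (fun y => f x * g y + f y * g x) (volume.restrict I) :=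
      (hgi.const_mul (f x)).add (hfi.mul_const (g x))
    have hB : Integrable (fun y : ℝ => f x * g x + f y * g y) (volume.restrict I) :=
      (integrableOn_const hvolfin.ne).add hfgi
    have hA1 : Integrable (fun y => f x * g y) (volume.restrict I) := hgi.const_mul (f x)
    have hA2 : Integrable (fun y => f y * g x) (volume.restrict I) := hfi.mul_const (g x)
    have hB1 : Integrable (fun _ : ℝ => f x * g x) (volume.restrict I) :=
      integrableOn_const hvolfin.ne
    simp only [e1]
    rw [integral_sub hA hB, integral_add hA1 hA2, integral_add hB1 hfgi,
      MeasureTheory.integral_const_mul, MeasureTheory.integral_mul_const, hconst]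
  have key : 0 ≤ ∫ x in I, ((f x * G + F * g x) - (f x * g x + K)) := by
    refine setIntegral_nonneg measurableSet_Ioo (fun x hx => ?_)
    rw [← expand x]
    refine setIntegral_nonneg measurableSet_Ioo (fun y hy => ?_)
    rcases le_total x y with h | h
    · exact mul_nonneg (sub_nonneg.2 (hf hx hy h)) (sub_nonneg.2 (hg hx hy h))
    · have h2 := mul_nonneg (sub_nonneg.2 (hf hy hx h)) (sub_nonneg.2 (hg hy hx h))
      nlinarith [h2]
  have hC : Integrable (fun x => f x * G + F * g x) (volume.restrict I) :=
    (hfi.mul_const G).add (hgi.const_mul F)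
  have hD : Integrable (fun x => f x * g x + K) (volume.restrict I) :=
    hfgi.add (integrableOn_const hvolfin.ne)
  have hC1 : Integrable (fun x => f x * G) (volume.restrict I) := hfi.mul_const G
  have hC2 : Integrable (fun x => F * g x) (volume.restrict I) := hgi.const_mul F
  rw [integral_sub hC hD, integral_add hC1 hC2,
      integral_add hfgi (integrableOn_const hvolfin.ne),
      MeasureTheory.integral_mul_const, MeasureTheory.integral_const_mul, hconst] at key
  rw [← hF, ← hG, ← hK] at key
  linarith



lemma core (α : ℝ) (hα0 : 0 < α) (hα1 : α < 1) (j : ℕ) (hj : 1 ≤ j) :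
    Real.Gamma (2-α) * Real.Gamma (1+α) ≤
      ∑ i ∈ Finset.range j,
        (((j:ℝ) - i) ^ (1-α) - ((j:ℝ) - i - 1) ^ (1-α)) * (((i:ℝ)+1) ^ α - (i:ℝ) ^ α) := by
  have hjpos : (0:ℝ) < j := by exact_mod_cast hj
  set g : ℝ → ℝ := fun s => s ^ (α-1) * ((j:ℝ) - s) ^ (-α) with hgdef
  set B : ℝ → ℝ := fun x => x ^ (α-1) * (1-x) ^ (-α) with hBdef
  -- scaling identity
  have hscale : ∀ s ∈ Icc (0:ℝ) (j:ℝ), (j:ℝ)⁻¹ * B ((j:ℝ)⁻¹ * s) = g s := by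
    intro s hs
    have hs0 : 0 ≤ s := hs.1
    have hsj : s ≤ j := hs.2
    have h1 : (j:ℝ)⁻¹ * s = s / j := by ring
    have h2 : (1 - s / j) = ((j:ℝ) - s) / j := by field_simp
    have h3 : (s / (j:ℝ)) ^ (α-1) = s ^ (α-1) / (j:ℝ) ^ (α-1) :=
      Real.div_rpow hs0 hjpos.le _
    have h4 : (((j:ℝ) - s) / j) ^ (-α) = ((j:ℝ) - s) ^ (-α) / (j:ℝ) ^ (-α) :=
      Real.div_rpow (by linarith) hjpos.le _
    simp only [hBdef, hgdef, h1, h2, h3, h4]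
    rw [div_mul_div_comm, ← Real.rpow_add hjpos]
    have h5 : α - 1 + -α = -1 := by ring
    rw [h5, Real.rpow_neg_one]
    field_simp
  -- interval integrability of g on 0..j
  have hBint := real_beta_integrable α hα0 hα1
  have hcomp := (hBint.comp_mul_left (c := (j:ℝ)⁻¹)).const_mul ((j:ℝ)⁻¹)
  have hc0 : (0:ℝ) / (j:ℝ)⁻¹ = 0 := by simp
  have hc1 : (1:ℝ) / (j:ℝ)⁻¹ = j := by field_simp
  rw [hc0, hc1] at hcomp
  have hgint : IntervalIntegrable g volume 0 (j:ℝ) := by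
    rw [intervalIntegrable_iff_integrableOn_Ioc_of_le hjpos.le] at hcomp ⊢
    exact hcomp.congr_fun
      (fun s hs => hscale s (Ioc_subset_Icc_self hs)) measurableSet_Ioc
  -- value of the whole integral
  have hval : ∫ x in (0:ℝ)..(j:ℝ), g x = Real.Gamma α * Real.Gamma (1-α) := by
    have e1 : ∫ x in (0:ℝ)..(j:ℝ), g x
        = ∫ x in (0:ℝ)..(j:ℝ), (j:ℝ)⁻¹ * B ((j:ℝ)⁻¹ * x) := by
      refine intervalIntegral.integral_congr (fun s hs => ?_)
      rw [uIcc_of_le hjpos.le] at hs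
      exact (hscale s hs).symm
    have e2 : ∫ x in (0:ℝ)..(j:ℝ), B ((j:ℝ)⁻¹ * x)
        = ((j:ℝ)⁻¹)⁻¹ • ∫ x in ((j:ℝ)⁻¹ * 0)..((j:ℝ)⁻¹ * j), B x :=
      intervalIntegral.integral_comp_mul_left B (inv_ne_zero hjpos.ne')
    rw [e1, intervalIntegral.integral_const_mul, e2]
    rw [mul_zero, inv_mul_cancel₀ hjpos.ne', inv_inv, real_beta_value α hα0 hα1]
    rw [smul_eq_mul, ← mul_assoc, inv_mul_cancel₀ hjpos.ne', one_mul]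
  -- per-interval bounds
  have hsub : ∀ i : ℕ, i < j → Ioo (i:ℝ) ((i:ℝ)+1) ⊆ Ioc (0:ℝ) (j:ℝ) := by
    intro i hi x hx
    have : ((i:ℝ)+1) ≤ j := by exact_mod_cast hi
    have h0 : (0:ℝ) ≤ i := Nat.cast_nonneg i
    exact ⟨lt_of_le_of_lt h0 hx.1, by linarith [hx.2]⟩
  have hbound : ∀ i : ℕ, i < j →
      ∫ x in Ioo (i:ℝ) ((i:ℝ)+1), g x ≤
        ((((i:ℝ)+1) ^ α - (i:ℝ) ^ α) / α) *
          ((((j:ℝ) - i) ^ (1-α) - ((j:ℝ) - i - 1) ^ (1-α)) / (1-α)) := by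
    intro i hi
    have hij : ((i:ℝ)+1) ≤ j := by exact_mod_cast hi
    have h0i : (0:ℝ) ≤ i := Nat.cast_nonneg i
    have hf : AntitoneOn (fun s : ℝ => s ^ (α-1)) (Ioo (i:ℝ) ((i:ℝ)+1)) := by
      intro x hx y hy hxy
      exact Real.rpow_le_rpow_of_nonpos (lt_of_le_of_lt h0i hx.1) hxy (by linarith)
    have hg : MonotoneOn (fun s : ℝ => ((j:ℝ) - s) ^ (-α)) (Ioo (i:ℝ) ((i:ℝ)+1)) := by
      intro x hx y hy hxy
      exact Real.rpow_le_rpow_of_nonpos (by linarith [hy.2]) (by linarith) (by linarith)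
    have hfi : IntegrableOn (fun s : ℝ => s ^ (α-1)) (Ioo (i:ℝ) ((i:ℝ)+1)) :=
      ((intervalIntegrable_rpow' (by linarith : (-1:ℝ) < α-1)
        (a := (i:ℝ)) (b := (i:ℝ)+1)).1).mono_set Ioo_subset_Ioc_self
    have hgi : IntegrableOn (fun s : ℝ => ((j:ℝ) - s) ^ (-α)) (Ioo (i:ℝ) ((i:ℝ)+1)) := by
      have h := ((intervalIntegrable_rpow' (by linarith : (-1:ℝ) < -α)
        (a := (j:ℝ)-(i:ℝ)) (b := (j:ℝ)-((i:ℝ)+1))).comp_sub_left (j:ℝ)).1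
      refine h.mono_set ?_
      intro x hx
      simp only [mem_Ioo, mem_Ioc] at hx ⊢
      exact ⟨by linarith [hx.1], by linarith [hx.2]⟩
    have hfgi : IntegrableOn g (Ioo (i:ℝ) ((i:ℝ)+1)) := by
      rw [intervalIntegrable_iff_integrableOn_Ioc_of_le hjpos.le] at hgint
      exact hgint.mono_set (hsub i hi)
    have hcheb := chebyshev_int (i:ℝ) (fun s => s ^ (α-1)) (fun s => ((j:ℝ) - s) ^ (-α))
      hf hg hfi hgi hfgi
    have hv1 : ∫ x in Ioo (i:ℝ) ((i:ℝ)+1), x ^ (α-1) = (((i:ℝ)+1) ^ α - (i:ℝ) ^ α) / α := by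
      rw [← integral_Ioc_eq_integral_Ioo,
        ← intervalIntegral.integral_of_le (by linarith : (i:ℝ) ≤ (i:ℝ)+1)]
      rw [integral_rpow (Or.inl (by linarith : (-1:ℝ) < α-1))]
      norm_num
    have hv2 : ∫ x in Ioo (i:ℝ) ((i:ℝ)+1), ((j:ℝ) - x) ^ (-α)
        = (((j:ℝ) - i) ^ (1-α) - ((j:ℝ) - i - 1) ^ (1-α)) / (1-α) := by
      rw [← integral_Ioc_eq_integral_Ioo,
        ← intervalIntegral.integral_of_le (by linarith : (i:ℝ) ≤ (i:ℝ)+1)]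
      rw [intervalIntegral.integral_comp_sub_left (fun x : ℝ => x ^ (-α)) (j:ℝ)]
      rw [integral_rpow (Or.inl (by linarith : (-1:ℝ) < -α))]
      have e : -α + 1 = 1 - α := by ring
      rw [e]
      ring_nf
    rw [hv1, hv2] at hcheb
    exact hcheb
  -- summing up
  have hsum : ∑ i ∈ Finset.range j, ∫ x in Ioo (i:ℝ) ((i:ℝ)+1), g x
      = ∫ x in (0:ℝ)..(j:ℝ), g x := by
    have hadj : ∀ k : ℕ, k < j →
        IntervalIntegrable g volume ((k:ℝ)) ((k:ℝ)+1) := by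
      intro k hk
      refine hgint.mono_set ?_
      rw [uIcc_of_le (by linarith : (k:ℝ) ≤ (k:ℝ)+1), uIcc_of_le hjpos.le]
      refine Icc_subset_Icc (Nat.cast_nonneg k) ?_
      exact_mod_cast hk
    have h2 := intervalIntegral.sum_integral_adjacent_intervals
      (a := fun n : ℕ => (n:ℝ)) (n := j) (f := g) (μ := volume)
      (by intro k hk; push_cast; exact hadj k hk)
    have h3 : ∑ k ∈ Finset.range j, ∫ x in ((k:ℝ))..((k:ℝ)+1), g x
        = ∫ x in (0:ℝ)..((j:ℝ)), g x := by
      beta_reduce at h2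
      push_cast at h2
      exact h2
    rw [← h3]
    refine Finset.sum_congr rfl (fun i _ => ?_)
    push_cast
    rw [intervalIntegral.integral_of_le (by linarith : (i:ℝ) ≤ (i:ℝ)+1),
      integral_Ioc_eq_integral_Ioo]
  have main : Real.Gamma α * Real.Gamma (1-α) ≤
      ∑ i ∈ Finset.range j, ((((i:ℝ)+1) ^ α - (i:ℝ) ^ α) / α) *
          ((((j:ℝ) - i) ^ (1-α) - ((j:ℝ) - i - 1) ^ (1-α)) / (1-α)) := by
    rw [← hval, ← hsum]
    exact Finset.sum_le_sum (fun i hi => hbound i (Finset.mem_range.1 hi))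
  -- Gamma algebra
  have hG1 : Real.Gamma (1+α) = α * Real.Gamma α := by
    rw [add_comm, Real.Gamma_add_one hα0.ne']
  have hG2 : Real.Gamma (2-α) = (1-α) * Real.Gamma (1-α) := by
    have : (2:ℝ) - α = (1-α) + 1 := by ring
    rw [this, Real.Gamma_add_one (by linarith : (1:ℝ)-α ≠ 0)]
  rw [hG1, hG2]
  have hpos : 0 < α * (1-α) := mul_pos hα0 (by linarith)
  calc (1-α) * Real.Gamma (1-α) * (α * Real.Gamma α)
      = (α * (1-α)) * (Real.Gamma α * Real.Gamma (1-α)) := by ring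
    _ ≤ (α * (1-α)) * ∑ i ∈ Finset.range j, ((((i:ℝ)+1) ^ α - (i:ℝ) ^ α) / α) *
          ((((j:ℝ) - i) ^ (1-α) - ((j:ℝ) - i - 1) ^ (1-α)) / (1-α)) :=
        mul_le_mul_of_nonneg_left main hpos.le
    _ = ∑ i ∈ Finset.range j,
        (((j:ℝ) - i) ^ (1-α) - ((j:ℝ) - i - 1) ^ (1-α)) * (((i:ℝ)+1) ^ α - (i:ℝ) ^ α) := by
        rw [Finset.mul_sum]
        refine Finset.sum_congr rfl (fun i _ => ?_)
        have h1α : (1:ℝ) - α ≠ 0 := by linarith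
        field_simp



theorem stmt_3 (α ρ : ℝ) (hα0 : 0 < α) (hα1 : α < 1) (hρ : 0 < ρ)
    (a P : ℕ → ℝ)
    (ha : ∀ k : ℕ, a k = (((k : ℝ) + 1) ^ (1 - α) - (k : ℝ) ^ (1 - α)) /
      (Real.Gamma (2 - α) * ρ ^ α))
    (hP0 : P 0 = 1 / a 0)
    (hP : ∀ l : ℕ, P (l + 1) =
      (1 / a 0) * ∑ m ∈ Finset.range (l + 1), P m * (a (l - m) - a (l + 1 - m))) :
    ∀ n : ℕ, 1 ≤ n →
      ∑ j ∈ Finset.Icc 1 n, P (n - j) ≤ ((n : ℝ) * ρ) ^ α / Real.Gamma (1 + α) := by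
  have hΓ2 : 0 < Real.Gamma (2 - α) := Real.Gamma_pos_of_pos (by linarith)
  have hΓ1 : 0 < Real.Gamma (1 + α) := Real.Gamma_pos_of_pos (by linarith)
  have hρα : (0:ℝ) < ρ ^ α := Real.rpow_pos_of_pos hρ α
  have ha0pos : 0 < a 0 := by
    rw [ha 0]
    rw [Nat.cast_zero, zero_add, Real.one_rpow, Real.zero_rpow (by linarith : 1 - α ≠ 0)]
    positivity
  -- a is nonincreasing and nonnegative
  have hdec : ∀ k : ℕ, a (k+1) ≤ a k := by
    intro k
    rw [ha k, ha (k+1)]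
    apply div_le_div_of_nonneg_right ?_ (by positivity)
    · push_cast
      have hconc := (Real.strictConcaveOn_rpow (by linarith : (0:ℝ) < 1-α) (by linarith)).concaveOn
      have h2 := hconc.2 (x := (k:ℝ)) (y := (k:ℝ)+2) (mem_Ici.2 (Nat.cast_nonneg k))
        (by simp only [mem_Ici]; positivity) (by norm_num) (by norm_num)
        (by norm_num : (1:ℝ)/2 + 1/2 = 1)
      simp only [smul_eq_mul] at h2
      have e : (1:ℝ)/2 * (k:ℝ) + 1/2 * ((k:ℝ)+2) = (k:ℝ)+1 := by ring
      rw [e] at h2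
      have e3 : (k:ℝ)+1+1 = (k:ℝ)+2 := by ring
      rw [e3]
      linarith
  have hnn : ∀ k : ℕ, 0 ≤ a k := by
    intro k
    rw [ha k]
    apply div_nonneg ?_ (by positivity)
    have := Real.rpow_le_rpow (Nat.cast_nonneg k) (by linarith : (k:ℝ) ≤ (k:ℝ)+1)
      (by linarith : (0:ℝ) ≤ 1-α)
    linarith
  have hdec' : ∀ p q : ℕ, p ≤ q → a q ≤ a p := by
    intro p q h
    induction q with
    | zero => simp_all
    | succ q ih =>
      rcases Nat.lt_or_ge p (q+1) with h2 | h2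
      · exact le_trans (hdec q) (ih (by omega))
      · have : p = q+1 := by omega
        simp [this]
  -- nonnegativity of P
  have hPnn : ∀ m : ℕ, 0 ≤ P m := by
    intro m
    induction m using Nat.strong_induction_on with
    | _ m ih =>
      match m with
      | 0 => rw [hP0]; positivity
      | l+1 =>
        rw [hP l]
        apply mul_nonneg (by positivity)
        apply Finset.sum_nonneg
        intro m hm
        have hm' : m < l+1 := Finset.mem_range.1 hm
        apply mul_nonneg (ih m (by omega))
        have : l + 1 - m = (l - m) + 1 := by omega
        rw [this]
        linarith [hdec (l-m)]
  -- convolution identity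
  have hconv : ∀ l : ℕ, ∑ m ∈ Finset.range (l+1), P m * a (l - m) = 1 := by
    intro l
    induction l with
    | zero => simp [hP0, ha0pos.ne']
    | succ l ih =>
      rw [Finset.sum_range_succ, Nat.sub_self]
      have hPl : P (l+1) * a 0 = ∑ m ∈ Finset.range (l + 1), P m * (a (l - m) - a (l + 1 - m)) := by
        rw [hP l]; field_simp
      rw [hPl]
      have comb : ∑ m ∈ Finset.range (l+1), P m * a (l + 1 - m)
          + ∑ m ∈ Finset.range (l + 1), P m * (a (l - m) - a (l + 1 - m))
          = ∑ m ∈ Finset.range (l+1), P m * a (l - m) := by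
        rw [← Finset.sum_add_distrib]
        exact Finset.sum_congr rfl (fun m _ => by ring)
      rw [comb, ih]
  -- the weight function
  set w : ℕ → ℝ := fun k => ((k:ℝ) * ρ) ^ α / Real.Gamma (1+α) with hw
  -- key inequality
  have hC : ∀ j : ℕ, 1 ≤ j → 1 ≤ ∑ k ∈ Finset.Icc 1 j, a (j-k) * (w k - w (k-1)) := by
    intro j hj
    have hcore := core α hα0 hα1 j hj
    have hre : ∑ k ∈ Finset.Icc 1 j, a (j-k) * (w k - w (k-1))
        = ∑ i ∈ Finset.range j, a (j-(i+1)) * (w (i+1) - w i) := by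
      rw [← Finset.Ico_add_one_right_eq_Icc, Finset.sum_Ico_eq_sum_range]
      have e0 : j + 1 - 1 = j := by omega
      rw [e0]
      exact Finset.sum_congr rfl (fun i _ => by rw [add_comm 1 i, Nat.add_sub_cancel])
    rw [hre]
    have hterm : ∀ i ∈ Finset.range j, a (j-(i+1)) * (w (i+1) - w i)
        = ((((j:ℝ) - i) ^ (1-α) - ((j:ℝ) - i - 1) ^ (1-α)) * (((i:ℝ)+1) ^ α - (i:ℝ) ^ α))
            / (Real.Gamma (2-α) * Real.Gamma (1+α)) := by
      intro i hi
      have hij : i + 1 ≤ j := Finset.mem_range.1 hi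
      rw [ha (j-(i+1))]
      have hcast : ((j - (i+1) : ℕ) : ℝ) = (j:ℝ) - (i:ℝ) - 1 := by
        push_cast [Nat.cast_sub hij]
        ring
      rw [hcast]
      have e1 : (j:ℝ) - (i:ℝ) - 1 + 1 = (j:ℝ) - i := by ring
      rw [e1]
      have hw1 : w (i+1) = (((i:ℝ)+1) ^ α) * ρ^α / Real.Gamma (1+α) := by
        simp only [hw]
        rw [Real.mul_rpow (by positivity) hρ.le]
        push_cast
        ring
      have hw2 : w i = ((i:ℝ) ^ α) * ρ^α / Real.Gamma (1+α) := by
        simp only [hw]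
        rw [Real.mul_rpow (Nat.cast_nonneg i) hρ.le]
      rw [hw1, hw2]
      field_simp
    rw [Finset.sum_congr rfl hterm, ← Finset.sum_div]
    rw [le_div_iff₀ (by positivity)]
    linarith [hcore]
  -- main argument
  intro n hn
  have step1 : ∑ j ∈ Finset.Icc 1 n, P (n-j)
      ≤ ∑ j ∈ Finset.Icc 1 n, ∑ k ∈ Finset.Icc 1 j, P (n-j) * (a (j-k) * (w k - w (k-1))) := by
    apply Finset.sum_le_sum
    intro j hj
    have hj1 : 1 ≤ j := (Finset.mem_Icc.1 hj).1
    calc P (n-j) = P (n-j) * 1 := by ring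
      _ ≤ P (n-j) * ∑ k ∈ Finset.Icc 1 j, a (j-k) * (w k - w (k-1)) :=
          mul_le_mul_of_nonneg_left (hC j hj1) (hPnn _)
      _ = ∑ k ∈ Finset.Icc 1 j, P (n-j) * (a (j-k) * (w k - w (k-1))) := Finset.mul_sum _ _ _
  have step2 : ∑ j ∈ Finset.Icc 1 n, ∑ k ∈ Finset.Icc 1 j, P (n-j) * (a (j-k) * (w k - w (k-1)))
      = ∑ k ∈ Finset.Icc 1 n, ∑ j ∈ Finset.Icc k n, P (n-j) * (a (j-k) * (w k - w (k-1))) := by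
    apply Finset.sum_comm'
    intro j k
    simp only [Finset.mem_Icc]
    omega
  have step3 : ∀ k ∈ Finset.Icc 1 n, ∑ j ∈ Finset.Icc k n, P (n-j) * a (j-k) = 1 := by
    intro k hk
    have hk' := Finset.mem_Icc.1 hk
    rw [← Finset.Ico_add_one_right_eq_Icc, Finset.sum_Ico_eq_sum_range]
    have hnk : n + 1 - k = (n-k) + 1 := by omega
    rw [hnk]
    have hcg : ∀ i ∈ Finset.range ((n-k)+1), P (n - (k+i)) * a (k+i-k)
        = P ((n-k) - i) * a i := by
      intro i hi
      have : n - (k+i) = (n-k) - i := by omega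
      rw [this, Nat.add_sub_cancel_left]
    rw [Finset.sum_congr rfl hcg]
    have := Finset.sum_range_reflect (fun m => P m * a ((n-k) - m)) ((n-k)+1)
    rw [← hconv (n-k), ← this]
    apply Finset.sum_congr rfl
    intro i hi
    have hi' : i < (n-k)+1 := Finset.mem_range.1 hi
    have e1 : (n-k) + 1 - 1 - i = (n-k) - i := by omega
    have e2 : (n-k) - ((n-k) - i) = i := by omega
    rw [e1, e2]
  have step4 : ∑ k ∈ Finset.Icc 1 n, ∑ j ∈ Finset.Icc k n, P (n-j) * (a (j-k) * (w k - w (k-1)))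
      = ∑ k ∈ Finset.Icc 1 n, (w k - w (k-1)) := by
    apply Finset.sum_congr rfl
    intro k hk
    have e : ∀ j, P (n-j) * (a (j-k) * (w k - w (k-1)))
        = (P (n-j) * a (j-k)) * (w k - w (k-1)) := fun j => by ring
    simp only [e]
    rw [← Finset.sum_mul, step3 k hk, one_mul]
  have step5 : ∑ k ∈ Finset.Icc 1 n, (w k - w (k-1)) = w n := by
    rw [← Finset.Ico_add_one_right_eq_Icc, Finset.sum_Ico_eq_sum_range]
    have hn1 : n + 1 - 1 = n := by omega
    rw [hn1]
    have hcg : ∀ i ∈ Finset.range n, w (1+i) - w (1+i-1) = w (i+1) - w i := by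
      intro i hi
      rw [add_comm 1 i, Nat.add_sub_cancel]
    rw [Finset.sum_congr rfl hcg, Finset.sum_range_sub w n]
    have : w 0 = 0 := by
      rw [hw]
      simp only [Nat.cast_zero, zero_mul]
      rw [Real.zero_rpow hα0.ne']
      simp
    rw [this, sub_zero]
  calc ∑ j ∈ Finset.Icc 1 n, P (n-j)
      ≤ ∑ j ∈ Finset.Icc 1 n, ∑ k ∈ Finset.Icc 1 j, P (n-j) * (a (j-k) * (w k - w (k-1))) := step1
    _ = ∑ k ∈ Finset.Icc 1 n, ∑ j ∈ Finset.Icc k n, P (n-j) * (a (j-k) * (w k - w (k-1))) := step2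
    _ = ∑ k ∈ Finset.Icc 1 n, (w k - w (k-1)) := step4
    _ = w n := step5
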